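/- Let c₀ denote the real Banach space of real sequences converging to 0, equipped with the supremum norm. For every x ∈ B_{c₀}, one has Dc(x) = 1. -/

import Mathlib

open Set Metric Filter
open Topology

variable {X : Type*} [NormedAddCommGroup X] [NormedSpace ℝ X]

/-- The slice `S(f, δ)` of the closed unit ball of `X`, determined by a norm-one functional
`f` and `δ > 0` (the norm and positivity conditions are imposed at use sites). -/
def unitBallSlice (f : X →L[ℝ] ℝ) (δ : ℝ) : Set X :=
  {y | ‖y‖ ≤ 1 ∧ 1 - δ < f y}

/-- The Daugavet constant of a point: the infimum over all slices of the unit ball of the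
supremum of distances from `x` to points of the slice. -/
noncomputable def Dc (x : X) : ℝ :=
  sInf {r | ∃ (f : X →L[ℝ] ℝ) (δ : ℝ), ‖f‖ = 1 ∧ 0 < δ ∧
    r = sSup ((fun y => ‖x - y‖) '' unitBallSlice f δ)}

/-- The Δ-constant of a point: the infimum over all slices of the unit ball containing `x`
of the supremum of distances from `x` to points of the slice. -/
noncomputable def DeltaC (x : X) : ℝ :=
  sInf {r | ∃ (f : X →L[ℝ] ℝ) (δ : ℝ), ‖f‖ = 1 ∧ 0 < δ ∧ x ∈ unitBallSlice f δ ∧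
    r = sSup ((fun y => ‖x - y‖) '' unitBallSlice f δ)}

/-- In `c₀` (realized as the sequences on `ℕ` vanishing at infinity, with the sup norm),
every point of the unit ball has Daugavet constant 1. -/
abbrev C0 := ZeroAtInftyContinuousMap ℕ ℝ

def ind (g : ℕ → ℝ) (F : Finset ℕ) : C0 where
  toFun := fun k => if k ∈ F then g k else 0
  continuous_toFun := continuous_of_discreteTopology
  zero_at_infty' := by
    apply Filter.Tendsto.congr' _ tendsto_const_nhds
    filter_upwards [mem_cocompact.2 ⟨(F : Set ℕ), F.finite_toSet.isCompact, subset_rfl⟩] with k hk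
    simp only [Set.mem_compl_iff, Finset.mem_coe] at hk
    simp [hk]

@[simp] lemma ind_apply (g : ℕ → ℝ) (F : Finset ℕ) (k : ℕ) :
    ind g F k = if k ∈ F then g k else 0 := rfl

lemma abs_apply_le_norm (y : C0) (k : ℕ) : |y k| ≤ ‖y‖ := by
  rw [← ZeroAtInftyContinuousMap.norm_toBCF_eq_norm]
  exact y.toBCF.norm_coe_le_norm k

lemma norm_le_iff (y : C0) {c : ℝ} (hc : 0 ≤ c) : ‖y‖ ≤ c ↔ ∀ k, |y k| ≤ c := by
  rw [← ZeroAtInftyContinuousMap.norm_toBCF_eq_norm]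
  exact BoundedContinuousFunction.norm_le hc

noncomputable def coordCLM (c : ℕ → ℝ) (F : Finset ℕ) : C0 →L[ℝ] ℝ :=
  LinearMap.mkContinuous
    { toFun := fun y => ∑ k ∈ F, c k * y k
      map_add' := by intro a b; simp [mul_add, Finset.sum_add_distrib]
      map_smul' := by
        intro m a
        simp only [ZeroAtInftyContinuousMap.coe_smul, Pi.smul_apply, smul_eq_mul,
          RingHom.id_apply, Finset.mul_sum]
        exact Finset.sum_congr rfl fun k _ => by ring }
    (∑ k ∈ F, |c k|) (by
      intro y
      simp only [LinearMap.coe_mk, AddHom.coe_mk, Real.norm_eq_abs]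
      calc |∑ k ∈ F, c k * y k| ≤ ∑ k ∈ F, |c k * y k| := Finset.abs_sum_le_sum_abs _ _
        _ ≤ ∑ k ∈ F, |c k| * ‖y‖ := by
            apply Finset.sum_le_sum
            intro k _
            rw [abs_mul]
            exact mul_le_mul_of_nonneg_left (abs_apply_le_norm y k) (abs_nonneg _)
        _ = (∑ k ∈ F, |c k|) * ‖y‖ := by rw [Finset.sum_mul])

@[simp] lemma coordCLM_apply (c : ℕ → ℝ) (F : Finset ℕ) (y : C0) :
    coordCLM c F y = ∑ k ∈ F, c k * y k := rfl

noncomputable def e (n : ℕ) : C0 := ind (fun _ => 1) {n}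

@[simp] lemma e_apply (n k : ℕ) : e n k = if k = n then 1 else 0 := by
  simp [e, Finset.mem_singleton]

lemma norm_e (n : ℕ) : ‖e n‖ ≤ 1 := by
  rw [norm_le_iff _ zero_le_one]
  intro k
  rcases eq_or_ne k n with h | h <;> simp [h]

def evalAM (k : ℕ) : C0 →+ ℝ where
  toFun := fun y => y k
  map_zero' := rfl
  map_add' := fun a b => rfl

lemma ind_eq_sum (g : ℕ → ℝ) (F : Finset ℕ) : ind g F = ∑ k ∈ F, g k • e k := by
  ext k
  have hs : (∑ j ∈ F, g j • e j) k = ∑ j ∈ F, (g j • e j) k :=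
    map_sum (evalAM k) _ F
  rw [hs]
  simp only [Finset.sum_apply, ZeroAtInftyContinuousMap.coe_smul, Pi.smul_apply, e_apply,
    smul_eq_mul, mul_ite, mul_one, mul_zero, ind_apply]
  rw [Finset.sum_ite_eq F k g]

lemma norm_ind_le (g : ℕ → ℝ) (F : Finset ℕ) (hg : ∀ k, |g k| ≤ 1) : ‖ind g F‖ ≤ 1 := by
  rw [norm_le_iff _ zero_le_one]
  intro k
  by_cases h : k ∈ F <;> simp [h, hg k]

lemma sum_abs_f_e_le (f : C0 →L[ℝ] ℝ) (F : Finset ℕ) : ∑ k ∈ F, |f (e k)| ≤ ‖f‖ := by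
  set g : ℕ → ℝ := fun k => if f (e k) < 0 then -1 else 1 with hg
  have hz : ‖ind g F‖ ≤ 1 :=
    norm_ind_le _ _ (fun k => by by_cases h : f (e k) < 0 <;> simp [hg, h])
  have h1 : f (ind g F) = ∑ k ∈ F, |f (e k)| := by
    rw [ind_eq_sum, map_sum]
    refine Finset.sum_congr rfl fun k _ => ?_
    rw [map_smul, smul_eq_mul]
    by_cases h : f (e k) < 0
    · simp only [hg, if_pos h]
      rw [abs_of_neg h]; ring
    · simp only [hg, if_neg h]
      rw [abs_of_nonneg (not_lt.1 h)]; ring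
  calc ∑ k ∈ F, |f (e k)| = f (ind g F) := h1.symm
    _ ≤ |f (ind g F)| := le_abs_self _
    _ ≤ ‖f‖ * ‖ind g F‖ := f.le_opNorm _
    _ ≤ ‖f‖ * 1 := mul_le_mul_of_nonneg_left hz (norm_nonneg f)
    _ = ‖f‖ := mul_one _

lemma tendsto_abs_f_e (f : C0 →L[ℝ] ℝ) : Tendsto (fun n => |f (e n)|) atTop (𝓝 0) :=
  (summable_of_sum_range_le (fun _ => abs_nonneg _)
    (fun n => sum_abs_f_e_le f (Finset.range n))).tendsto_atTop_zero


lemma lower_bound (x : C0) (f : C0 →L[ℝ] ℝ) (hf : ‖f‖ = 1) {δ : ℝ} (hδ : 0 < δ) :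
    ∃ y ∈ unitBallSlice f δ, 1 ≤ ‖x - y‖ := by
  -- find y₁ in the ball with f y₁ > 1 - δ/2
  obtain ⟨y₀, hy₀, hfy₀⟩ := f.exists_lt_apply_of_lt_opNorm (r := 1 - δ/2) (by rw [hf]; linarith)
  set y₁ : C0 := if 0 ≤ f y₀ then y₀ else -y₀ with hy₁def
  have hy₁ : ‖y₁‖ ≤ 1 := by
    by_cases h : 0 ≤ f y₀ <;> simp [hy₁def, h] <;> linarith [hy₀]
  have hfy₁ : 1 - δ/2 < f y₁ := by
    by_cases h : 0 ≤ f y₀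
    · simp only [hy₁def, if_pos h]
      rwa [Real.norm_eq_abs, abs_of_nonneg h] at hfy₀
    · simp only [hy₁def, if_neg h, map_neg]
      rwa [Real.norm_eq_abs, abs_of_neg (not_le.1 h)] at hfy₀
  -- choose n with |f (e n)| small
  have hη : (0:ℝ) < (f y₁ - (1 - δ)) / 2 := by linarith
  obtain ⟨n, hn⟩ := ((tendsto_abs_f_e f).eventually
    (eventually_lt_nhds hη)).exists
  set s : ℝ := if 0 ≤ x n then -1 else 1 with hs
  have hs1 : |s| = 1 := by by_cases h : 0 ≤ x n <;> simp [hs, h]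
  set y : C0 := y₁ + (s - y₁ n) • e n with hy
  have hyk : ∀ k, y k = if k = n then s else y₁ k := by
    intro k
    simp only [hy, ZeroAtInftyContinuousMap.coe_add, Pi.add_apply,
      ZeroAtInftyContinuousMap.coe_smul, Pi.smul_apply, e_apply, smul_eq_mul]
    by_cases h : k = n
    · subst h; simp
    · simp [h]
  have hynorm : ‖y‖ ≤ 1 := by
    rw [norm_le_iff _ zero_le_one]
    intro k
    rw [hyk k]
    by_cases h : k = n
    · simp [h, hs1.le]
    · simp only [if_neg h]
      exact (abs_apply_le_norm y₁ k).trans hy₁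
  have hfy : 1 - δ < f y := by
    have h1 : f y = f y₁ + (s - y₁ n) * f (e n) := by
      simp [hy, map_add, map_smul, smul_eq_mul]
    have h2 : |(s - y₁ n) * f (e n)| ≤ 2 * |f (e n)| := by
      rw [abs_mul]
      apply mul_le_mul_of_nonneg_right _ (abs_nonneg _)
      calc |s - y₁ n| ≤ |s| + |y₁ n| := abs_sub _ _
        _ ≤ 1 + 1 := add_le_add hs1.le ((abs_apply_le_norm y₁ n).trans hy₁)
        _ = 2 := by norm_num
    have := neg_abs_le ((s - y₁ n) * f (e n))
    rw [h1]
    nlinarith [abs_nonneg (f (e n))]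
  refine ⟨y, ⟨hynorm, hfy⟩, ?_⟩
  have h3 : (x - y) n = x n - s := by
    have h5 := hyk n
    rw [if_pos rfl] at h5
    simp [ZeroAtInftyContinuousMap.coe_sub, Pi.sub_apply, h5]
  have h4 : 1 ≤ |x n - s| := by
    by_cases h : 0 ≤ x n
    · simp only [hs, if_pos h]
      rw [abs_of_nonneg (by linarith)]; linarith
    · simp only [hs, if_neg h]
      rw [abs_of_nonpos (by push_neg at h; linarith)]
      push_neg at h; linarith
  calc (1:ℝ) ≤ |x n - s| := h4
    _ = |(x - y) n| := by rw [h3]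
    _ ≤ ‖x - y‖ := abs_apply_le_norm _ _

set_option maxHeartbeats 1000000 in
lemma upper_bound_aux (x : C0) (hx : ‖x‖ ≤ 1) {ε : ℝ} (hε : 0 < ε)
    (F : Finset ℕ) (hFne : F.Nonempty) (hsmall : ∀ k ∉ F, |x k| ≤ ε) :
    ∃ (f : C0 →L[ℝ] ℝ) (δ : ℝ), ‖f‖ = 1 ∧ 0 < δ ∧ (unitBallSlice f δ).Nonempty ∧
      ∀ y ∈ unitBallSlice f δ, ‖x - y‖ ≤ 1 + ε := by
  set m : ℕ := F.card with hm
  have hm0 : 0 < m := Finset.card_pos.2 hFne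
  have hmR : (0:ℝ) < m := Nat.cast_pos.2 hm0
  set sg : ℕ → ℝ := fun k => if x k < 0 then -1 else 1 with hsg
  have hsg1 : ∀ k, |sg k| = 1 := fun k => by by_cases h : x k < 0 <;> simp [hsg, h]
  set c : ℕ → ℝ := fun k => sg k / m with hc
  have hcsum : ∑ k ∈ F, |c k| = 1 := by
    have h : ∀ k ∈ F, |c k| = 1 / m := by
      intro k _
      rw [hc]; simp only [abs_div, hsg1 k, abs_of_pos hmR]
    rw [Finset.sum_congr rfl h, Finset.sum_const, nsmul_eq_mul, ← hm]
    field_simp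
  set f := coordCLM c F with hfdef
  set z : C0 := ind sg F with hz
  have hznorm : ‖z‖ ≤ 1 := norm_ind_le _ _ (fun k => (hsg1 k).le)
  have hfz : f z = 1 := by
    rw [hfdef, coordCLM_apply]
    have h : ∀ k ∈ F, c k * z k = 1 / m := by
      intro k hk
      rw [hz, ind_apply, if_pos hk, hc]
      by_cases h : x k < 0 <;> simp [hsg, h] <;> ring
    rw [Finset.sum_congr rfl h, Finset.sum_const, nsmul_eq_mul, ← hm]
    field_simp
  have hfnorm : ‖f‖ = 1 := by
    apply le_antisymm
    · calc ‖f‖ ≤ ∑ k ∈ F, |c k| :=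
            LinearMap.mkContinuous_norm_le _ (Finset.sum_nonneg fun k _ => abs_nonneg _) _
        _ = 1 := hcsum
    · calc (1:ℝ) = f z := hfz.symm
        _ ≤ |f z| := le_abs_self _
        _ ≤ ‖f‖ * ‖z‖ := f.le_opNorm z
        _ ≤ ‖f‖ * 1 := mul_le_mul_of_nonneg_left hznorm (norm_nonneg f)
        _ = ‖f‖ := mul_one _
  set δ : ℝ := ε / m with hδdef
  have hδ : 0 < δ := div_pos hε hmR
  have hzslice : z ∈ unitBallSlice f δ := ⟨hznorm, by rw [hfz]; linarith⟩
  refine ⟨f, δ, hfnorm, hδ, ⟨z, hzslice⟩, ?_⟩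
  rintro y ⟨hy1, hy2⟩
  rw [norm_le_iff _ (by linarith)]
  intro k
  have hxk : |x k| ≤ 1 := (abs_apply_le_norm x k).trans hx
  have hyk : |y k| ≤ 1 := (abs_apply_le_norm y k).trans hy1
  have hsub : |(x - y) k| = |x k - y k| := by
    simp [ZeroAtInftyContinuousMap.coe_sub, Pi.sub_apply]
  rw [hsub]
  by_cases hkF : k ∈ F
  · -- big coordinate: the slice forces sg k * y k > 1 - ε
    have hterm : ∀ j ∈ F, c j * y j ≤ 1 / (m:ℝ) := by
      intro j _
      have hyj : |y j| ≤ 1 := (abs_apply_le_norm y j).trans hy1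
      have h1 : sg j * y j ≤ 1 := by
        calc sg j * y j ≤ |sg j * y j| := le_abs_self _
          _ = |sg j| * |y j| := abs_mul _ _
          _ ≤ 1 * 1 := by rw [hsg1 j]; exact mul_le_mul_of_nonneg_left hyj (by norm_num)
          _ = 1 := one_mul _
      rw [hc]
      rw [div_mul_eq_mul_div, div_le_div_iff₀ hmR hmR]
      nlinarith
    have hrest : ∑ j ∈ F.erase k, c j * y j ≤ ((m:ℝ) - 1) / m := by
      calc ∑ j ∈ F.erase k, c j * y j ≤ ∑ j ∈ F.erase k, (1:ℝ) / m :=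
            Finset.sum_le_sum (fun j hj => hterm j (Finset.mem_of_mem_erase hj))
        _ = ((F.erase k).card : ℝ) * (1 / m) := by rw [Finset.sum_const, nsmul_eq_mul]
        _ = ((m - 1 : ℕ) : ℝ) * (1 / m) := by rw [Finset.card_erase_of_mem hkF, hm]
        _ = ((m:ℝ) - 1) / m := by
            rw [Nat.cast_sub hm0, Nat.cast_one]; ring
    have hsplit : c k * y k + ∑ j ∈ F.erase k, c j * y j = f y := by
      rw [hfdef, coordCLM_apply]
      exact Finset.add_sum_erase F (fun j => c j * y j) hkF
    have hck : 1 - δ - ((m:ℝ) - 1) / m < c k * y k := by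
      have h2 : 1 - δ < c k * y k + ∑ j ∈ F.erase k, c j * y j := by rw [hsplit]; exact hy2
      linarith
    have hsky : 1 - ε < sg k * y k := by
      have h1 : c k * y k = sg k * y k / m := by rw [hc]; ring
      have heq : 1 - δ - ((m:ℝ) - 1) / m = (1 - ε) / m := by
        rw [hδdef]; field_simp; ring
      rw [h1, heq] at hck
      have h3 := (div_lt_div_iff₀ hmR hmR).1 hck
      exact lt_of_mul_lt_mul_right h3 hmR.le
    have hy1' := abs_le.1 hyk
    have hx1' := abs_le.1 hxk
    rw [abs_le]
    by_cases h : x k < 0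
    · have hsgk : sg k = -1 := by simp [hsg, h]
      rw [hsgk, neg_one_mul] at hsky
      constructor <;> linarith
    · have hsgk : sg k = 1 := by simp [hsg, h]
      rw [hsgk, one_mul] at hsky
      constructor <;> linarith
  · -- small coordinate
    calc |x k - y k| ≤ |x k| + |y k| := abs_sub _ _
      _ ≤ ε + 1 := add_le_add (hsmall k hkF) hyk
      _ = 1 + ε := by ring

lemma upper_bound (x : C0) (hx : ‖x‖ ≤ 1) {ε : ℝ} (hε : 0 < ε) :
    ∃ (f : C0 →L[ℝ] ℝ) (δ : ℝ), ‖f‖ = 1 ∧ 0 < δ ∧ (unitBallSlice f δ).Nonempty ∧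
      ∀ y ∈ unitBallSlice f δ, ‖x - y‖ ≤ 1 + ε := by
  have hfin : {k : ℕ | ε < |x k|}.Finite := by
    have hev : {k : ℕ | |x k| < ε} ∈ cocompact ℕ := by
      have h2 : ∀ᶠ k in cocompact ℕ, x k ∈ Metric.ball (0:ℝ) ε :=
        x.zero_at_infty' (Metric.ball_mem_nhds 0 hε)
      simpa [Real.dist_eq] using h2
    obtain ⟨t, ht, hts⟩ := mem_cocompact.1 hev
    apply ht.finite_of_discrete.subset
    intro k hk
    by_contra hkt
    have h3 := hts hkt
    simp only [Set.mem_setOf_eq] at h3 hk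
    linarith
  exact upper_bound_aux x hx hε (insert 0 hfin.toFinset) ⟨0, Finset.mem_insert_self _ _⟩
    (fun k hk => not_lt.1 fun hcon =>
      hk (Finset.mem_insert_of_mem (hfin.mem_toFinset.2 hcon)))

theorem daugavetConstant_c0 (x : ZeroAtInftyContinuousMap ℕ ℝ) (hx : ‖x‖ ≤ 1) :
    Dc x = 1 := by
  set S := {r | ∃ (f : C0 →L[ℝ] ℝ) (δ : ℝ), ‖f‖ = 1 ∧ 0 < δ ∧
    r = sSup ((fun y => ‖x - y‖) '' unitBallSlice f δ)} with hS
  have hbdd : ∀ (f : C0 →L[ℝ] ℝ) (δ : ℝ),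
      BddAbove ((fun y => ‖x - y‖) '' unitBallSlice f δ) := by
    intro f δ
    refine ⟨‖x‖ + 1, ?_⟩
    rintro r ⟨y, ⟨hy1, _⟩, rfl⟩
    calc ‖x - y‖ ≤ ‖x‖ + ‖y‖ := norm_sub_le _ _
      _ ≤ ‖x‖ + 1 := by linarith
  have claim1 : ∀ r ∈ S, 1 ≤ r := by
    rintro r ⟨f, δ, hf, hδ, rfl⟩
    obtain ⟨y, hy, hxy⟩ := lower_bound x f hf hδ
    exact hxy.trans (le_csSup (hbdd f δ) ⟨y, hy, rfl⟩)
  have claim2 : ∀ ε : ℝ, 0 < ε → ∃ r ∈ S, r ≤ 1 + ε := by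
    intro ε hε
    obtain ⟨f, δ, hf, hδ, ⟨z, hz⟩, hub⟩ := upper_bound x hx hε
    refine ⟨_, ⟨f, δ, hf, hδ, rfl⟩, ?_⟩
    refine csSup_le ⟨‖x - z‖, ⟨z, hz, rfl⟩⟩ ?_
    rintro r ⟨y, hy, rfl⟩
    exact hub y hy
  have hSne : S.Nonempty := by
    obtain ⟨r, hr, _⟩ := claim2 1 one_pos
    exact ⟨r, hr⟩
  have hSbdd : BddBelow S := ⟨1, fun r hr => claim1 r hr⟩
  apply le_antisymm
  · apply le_of_forall_pos_le_add
    intro ε hε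
    obtain ⟨r, hrS, hr⟩ := claim2 ε hε
    exact (csInf_le hSbdd hrS).trans hr
  · exact le_csInf hSne claim1
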